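/- Let μ be a probability measure and f ≥ 0 a density with ∫ f dμ = 1. Then (∫ |f−1| dμ)² ≤ 2 ∫ f log f dμ (Pinsker-type entropy inequality). -/

import Mathlib

open MeasureTheory Real

/-- auxiliary: `(x+1) log x - 2(x-1)` is monotone on `(0,∞)`. -/
lemma aux_g_mono : MonotoneOn (fun x : ℝ => (x + 1) * Real.log x - 2 * (x - 1)) (Set.Ioi 0) := by
  have h : ∀ x ∈ interior (Set.Ioi (0:ℝ)),
      0 ≤ deriv (fun x : ℝ => (x + 1) * Real.log x - 2 * (x - 1)) x := by
    intro x hx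
    rw [interior_Ioi] at hx
    have hx0 : (0:ℝ) < x := hx
    have hd : HasDerivAt (fun x : ℝ => (x + 1) * Real.log x - 2 * (x - 1))
        (1 * Real.log x + (x + 1) * x⁻¹ - 2 * 1) x := by
      exact (((hasDerivAt_id x).add_const 1).mul (Real.hasDerivAt_log hx0.ne')).sub
        (((hasDerivAt_id x).sub_const 1).const_mul 2)
    rw [hd.deriv]
    have hlog : 1 - x⁻¹ ≤ Real.log x := Real.one_sub_inv_le_log_of_pos hx0
    have : (x + 1) * x⁻¹ = 1 + x⁻¹ := by field_simp
    rw [this]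
    nlinarith
  apply monotoneOn_of_deriv_nonneg (convex_Ioi 0) ?_ ?_ h
  · apply ContinuousOn.sub
    · exact (continuousOn_id.add continuousOn_const).mul
        (Real.continuousOn_log.mono (by intro x hx; exact ne_of_gt hx))
    · fun_prop
  · rw [interior_Ioi]
    exact (differentiable_id.add_const 1).differentiableOn.mul
      (Real.differentiableOn_log.mono (by intro x hx; exact ne_of_gt (by exact hx))) |>.sub
      (by fun_prop)

lemma aux_psi_deriv {x : ℝ} (hx : 0 < x) :
    HasDerivAt (fun x : ℝ => (x + 2) * (x * Real.log x - x + 1) - 3/2 * (x - 1)^2)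
      (2 * ((x + 1) * Real.log x - 2 * (x - 1))) x := by
  have h1 : HasDerivAt (fun x : ℝ => x * Real.log x) (Real.log x + 1) x := by
    have := (hasDerivAt_id x).mul (Real.hasDerivAt_log hx.ne')
    exact this.congr_deriv (by simp [mul_inv_cancel₀ hx.ne'])
  have h2 : HasDerivAt (fun x : ℝ => (x + 2) * (x * Real.log x - x + 1))
      (1 * (x * Real.log x - x + 1) + (x + 2) * ((Real.log x + 1) - 1)) x :=
    ((hasDerivAt_id x).add_const 2).mul ((h1.sub (hasDerivAt_id x)).add_const 1)
  have h3 : HasDerivAt (fun x : ℝ => 3/2 * (x - 1)^2) (3/2 * (2 * (x - 1))) x := by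
    have : HasDerivAt (fun x : ℝ => (x - 1)^2) (2 * (x - 1)) x := by
      exact (((hasDerivAt_id x).sub_const 1).pow 2).congr_deriv (by simp)
    exact this.const_mul _
  exact (h2.sub h3).congr_deriv (by ring)

/-- Key pointwise inequality (Csiszár): for `x ≥ 0`,
`3(x-1)^2 ≤ 2(x+2)(x log x - x + 1)`. -/
lemma aux_key {x : ℝ} (hx : 0 ≤ x) :
    3 * (x - 1)^2 ≤ 2 * (x + 2) * (x * Real.log x - x + 1) := by
  set ψ : ℝ → ℝ := fun x => (x + 2) * (x * Real.log x - x + 1) - 3/2 * (x - 1)^2 with hψ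
  have hψ0 : ∀ y : ℝ, 0 ≤ y → 0 ≤ ψ y := by
    intro y hy
    rcases eq_or_lt_of_le hy with h | hy0
    · simp [hψ, ← h]; norm_num
    have hψ1 : ψ 1 = 0 := by simp [hψ]
    have hcont : ContinuousOn ψ (Set.Ioi 0) := by
      apply ContinuousOn.sub
      · exact (continuousOn_id.add continuousOn_const).mul
          (((continuousOn_id.mul (Real.continuousOn_log.mono
            (fun x hx => ne_of_gt hx))).sub continuousOn_id).add continuousOn_const)
      · fun_prop
    rcases le_or_gt 1 y with h1 | h1
    · -- monotone on [1, ∞)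
      have hmono : MonotoneOn ψ (Set.Ici 1) := by
        apply monotoneOn_of_deriv_nonneg (convex_Ici 1)
          (hcont.mono (fun z hz => show (0:ℝ) < z from lt_of_lt_of_le one_pos hz))
        · intro z hz
          rw [interior_Ici] at hz
          exact (aux_psi_deriv (lt_trans one_pos hz)).differentiableAt.differentiableWithinAt
        · intro z hz
          rw [interior_Ici] at hz
          rw [(aux_psi_deriv (lt_trans one_pos hz)).deriv]
          have := aux_g_mono (Set.mem_Ioi.mpr one_pos) (Set.mem_Ioi.mpr (lt_trans one_pos hz))
            hz.le
          simp only [Real.log_one] at this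
          nlinarith
      have := hmono (Set.mem_Ici.mpr le_rfl) (Set.mem_Ici.mpr h1) h1
      rw [hψ1] at this; exact this
    · -- antitone on (0, 1]
      have hanti : AntitoneOn ψ (Set.Ioc 0 1) := by
        apply antitoneOn_of_deriv_nonpos (convex_Ioc 0 1)
          (hcont.mono (fun z hz => hz.1))
        · intro z hz
          rw [interior_Ioc] at hz
          exact (aux_psi_deriv hz.1).differentiableAt.differentiableWithinAt
        · intro z hz
          rw [interior_Ioc] at hz
          rw [(aux_psi_deriv hz.1).deriv]
          have := aux_g_mono (Set.mem_Ioi.mpr hz.1) (Set.mem_Ioi.mpr one_pos) hz.2.le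
          simp only [Real.log_one] at this
          nlinarith
      have := hanti (Set.mem_Ioc.mpr ⟨hy0, h1.le⟩) (Set.mem_Ioc.mpr ⟨one_pos, le_rfl⟩) h1.le
      rw [hψ1] at this; exact this
  have := hψ0 x hx
  simp only [hψ] at this
  nlinarith
theorem entropy_pinsker {Ω : Type*} [MeasurableSpace Ω] (μ : Measure Ω)
    [IsProbabilityMeasure μ] (f : Ω → ℝ) (hf : ∀ ω, 0 ≤ f ω)
    (hint : Integrable f μ) (hnorm : ∫ ω, f ω ∂μ = 1)
    (hent : Integrable (fun ω => f ω * Real.log (f ω)) μ) :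
    (∫ ω, |f ω - 1| ∂μ) ^ 2 ≤ 2 * ∫ ω, f ω * Real.log (f ω) ∂μ := by
  set u : Ω → ℝ := fun ω => Real.sqrt ((f ω + 2) / 3) with hu
  set v : Ω → ℝ := fun ω => Real.sqrt (3 * (f ω - 1) ^ 2 / (f ω + 2)) with hv
  have hpos : ∀ ω, (0:ℝ) < f ω + 2 := fun ω => by linarith [hf ω]
  have hu2 : ∀ ω, u ω ^ 2 = (f ω + 2) / 3 := by
    intro ω
    rw [hu, Real.sq_sqrt (div_nonneg (hpos ω).le (by norm_num))]
  have hv2 : ∀ ω, v ω ^ 2 = 3 * (f ω - 1) ^ 2 / (f ω + 2) := by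
    intro ω
    rw [hv, Real.sq_sqrt (div_nonneg (by positivity) (hpos ω).le)]
  have huv : ∀ ω, u ω * v ω = |f ω - 1| := by
    intro ω
    have hne : f ω + 2 ≠ 0 := (hpos ω).ne'
    rw [hu, hv, ← Real.sqrt_mul (div_nonneg (hpos ω).le (by norm_num)),
      ← Real.sqrt_sq_eq_abs]
    congr 1
    field_simp
  have hvb : ∀ ω, v ω ^ 2 ≤ 2 * (f ω * Real.log (f ω) - f ω + 1) := by
    intro ω
    rw [hv2, div_le_iff₀ (hpos ω)]
    nlinarith [aux_key (hf ω)]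
  -- measurability
  have hfa : AEMeasurable f μ := hint.aestronglyMeasurable.aemeasurable
  have hum : AEStronglyMeasurable u μ := by
    have : Measurable fun x : ℝ => Real.sqrt ((x + 2) / 3) := by fun_prop
    exact (this.comp_aemeasurable hfa).aestronglyMeasurable
  have hvm : AEStronglyMeasurable v μ := by
    have : Measurable fun x : ℝ => Real.sqrt (3 * (x - 1) ^ 2 / (x + 2)) := by
      fun_prop
    exact (this.comp_aemeasurable hfa).aestronglyMeasurable
  -- integrability of squares
  have hu2int : Integrable (fun ω => u ω ^ 2) μ := by
    have : (fun ω => u ω ^ 2) = fun ω => (f ω + 2) / 3 := funext hu2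
    rw [this]
    exact (hint.add (integrable_const 2)).div_const 3
  have hgint : Integrable (fun ω => 2 * (f ω * Real.log (f ω) - f ω + 1)) μ :=
    (((hent.sub hint).add (integrable_const 1)).const_mul 2).congr
      (Filter.Eventually.of_forall fun ω => by simp only [Pi.sub_apply, Pi.add_apply]; try ring)
  have hv2int : Integrable (fun ω => v ω ^ 2) μ := by
    apply Integrable.mono' hgint (hvm.pow 2)
    filter_upwards with ω
    show ‖v ω ^ 2‖ ≤ 2 * (f ω * Real.log (f ω) - f ω + 1)
    rw [Real.norm_of_nonneg (sq_nonneg _)]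
    exact hvb ω
  -- Hölder / Cauchy–Schwarz
  have hpq : Real.HolderConjugate 2 2 := ⟨by norm_num, by norm_num, by norm_num⟩
  have h2 : (ENNReal.ofReal (2:ℝ)) = 2 := by norm_num
  have humem : MemLp u (ENNReal.ofReal (2:ℝ)) μ := by
    rw [h2]; exact (memLp_two_iff_integrable_sq hum).mpr hu2int
  have hvmem : MemLp v (ENNReal.ofReal (2:ℝ)) μ := by
    rw [h2]; exact (memLp_two_iff_integrable_sq hvm).mpr hv2int
  have hH := integral_mul_le_Lp_mul_Lq_of_nonneg hpq
    (Filter.Eventually.of_forall fun ω => Real.sqrt_nonneg _)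
    (Filter.Eventually.of_forall fun ω => Real.sqrt_nonneg _) humem hvmem
  have e1 : ∫ a, u a ^ (2:ℝ) ∂μ = ∫ ω, u ω ^ 2 ∂μ :=
    integral_congr_ae (Filter.Eventually.of_forall fun ω => by
      show u ω ^ (2:ℝ) = u ω ^ 2
      rw [show ((2:ℝ)) = ((2:ℕ):ℝ) by norm_num, Real.rpow_natCast])
  have e2 : ∫ a, v a ^ (2:ℝ) ∂μ = ∫ ω, v ω ^ 2 ∂μ :=
    integral_congr_ae (Filter.Eventually.of_forall fun ω => by
      show v ω ^ (2:ℝ) = v ω ^ 2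
      rw [show ((2:ℝ)) = ((2:ℕ):ℝ) by norm_num, Real.rpow_natCast])
  rw [e1, e2] at hH
  have hIu : ∫ ω, u ω ^ 2 ∂μ = 1 := by
    have : (fun ω => u ω ^ 2) = fun ω => (f ω + 2) / 3 := funext hu2
    rw [this]
    rw [show (fun ω => (f ω + 2) / 3) = fun ω => (f ω + 2) * (3:ℝ)⁻¹ from
      funext fun ω => by ring]
    rw [integral_mul_const, integral_add hint (integrable_const 2), hnorm,
      integral_const]
    norm_num
  have hIuv : ∫ ω, u ω * v ω ∂μ = ∫ ω, |f ω - 1| ∂μ :=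
    integral_congr_ae (Filter.Eventually.of_forall fun ω => huv ω)
  rw [hIu, hIuv] at hH
  simp only [Real.one_rpow, one_mul] at hH
  -- bound on ∫ v²
  have hB : ∫ ω, v ω ^ 2 ∂μ ≤ 2 * ∫ ω, f ω * Real.log (f ω) ∂μ := by
    have := integral_mono hv2int hgint (fun ω => hvb ω)
    calc ∫ ω, v ω ^ 2 ∂μ ≤ ∫ ω, 2 * (f ω * Real.log (f ω) - f ω + 1) ∂μ := this
      _ = 2 * ∫ ω, f ω * Real.log (f ω) ∂μ := by
          have hsub : Integrable (fun ω => f ω * Real.log (f ω) - f ω) μ := hent.sub hint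
          rw [MeasureTheory.integral_const_mul, integral_add hsub (integrable_const 1),
            integral_sub hent hint, hnorm, integral_const]
          simp
  have hBnn : 0 ≤ ∫ ω, v ω ^ 2 ∂μ := integral_nonneg fun ω => sq_nonneg _
  have hA : 0 ≤ ∫ ω, |f ω - 1| ∂μ := integral_nonneg fun ω => abs_nonneg _
  calc (∫ ω, |f ω - 1| ∂μ) ^ 2 ≤ ((∫ ω, v ω ^ 2 ∂μ) ^ ((1:ℝ)/2)) ^ 2 := by
        apply pow_le_pow_left₀ hA hH
    _ = ∫ ω, v ω ^ 2 ∂μ := by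
        rw [← Real.rpow_natCast (_ ^ ((1:ℝ)/2)) 2, ← Real.rpow_mul hBnn]
        norm_num
    _ ≤ 2 * ∫ ω, f ω * Real.log (f ω) ∂μ := hB
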